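/- Let A be a semiperfect ring whose Jacobson radical m satisfies ⋂ₙ mⁿ = 0, and let M be a finitely generated left A-module such that Hom_A(M, −) is an exact functor on the category of finite-length left A-modules. Then M is projective. -/

import Mathlib

open CategoryTheory

/-- `f : P →ₗ[A] M` is a projective cover: `P` is projective, `f` is surjective, and the
kernel of `f` is superfluous in `P`. -/
def IsProjectiveCover {A : Type u} [Ring A] {P M : Type u} [AddCommGroup P] [Module A P]
    [AddCommGroup M] [Module A M] (f : P →ₗ[A] M) : Prop :=
  Module.Projective A P ∧ Function.Surjective f ∧
    ∀ N : Submodule A P, N ⊔ LinearMap.ker f = ⊤ → N = ⊤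

/-- A ring is semiperfect iff every finitely generated left module admits a projective
cover (Lam, Proposition 24.12). -/
def IsSemiperfectRing (A : Type u) [Ring A] : Prop :=
  ∀ (M : Type u) [AddCommGroup M] [Module A M], Module.Finite A M →
    ∃ (P : Type u) (_ : AddCommGroup P) (_ : Module A P) (f : P →ₗ[A] M),
      IsProjectiveCover f

/-- The submodule `mⁿM` for a left ideal `m`, defined by iterated ideal `•`. -/
def idealPowSMulTop {A : Type u} [Ring A] (J : Ideal A) (M : Type u) [AddCommGroup M]
    [Module A M] (n : ℕ) : Submodule A M :=
  (fun N : Submodule A M => J • N)^[n] ⊤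

universe u
open Submodule LinearMap

section Aux
variable {A : Type u} [Ring A]


/-- The kernel of a surjection onto a simple module is a coatom. -/
theorem isCoatom_ker_of_surjective {P N : Type*} [AddCommGroup P] [Module A P]
    [AddCommGroup N] [Module A N] [IsSimpleModule A N] (g : P →ₗ[A] N)
    (hg : Function.Surjective g) : IsCoatom (LinearMap.ker g) := by
  constructor
  · intro h
    have : Nontrivial N := IsSimpleModule.nontrivial A N
    obtain ⟨y, hy⟩ := exists_ne (0 : N)
    obtain ⟨x, rfl⟩ := hg y
    have hx : x ∈ LinearMap.ker g := h.symm ▸ Submodule.mem_top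
    exact hy (by simpa [LinearMap.mem_ker] using hx)
  · intro W hW
    have h1 : Submodule.map g W = ⊤ := by
      rcases eq_bot_or_eq_top (Submodule.map g W) with h | h
      · exfalso
        have : W ≤ LinearMap.ker g := by
          intro w hw
          have : g w ∈ Submodule.map g W := Submodule.mem_map_of_mem hw
          rw [h] at this
          simpa [LinearMap.mem_ker] using this
        exact (ne_of_gt hW) (le_antisymm this hW.le)
      · exact h
    have h2 := Submodule.comap_map_eq g W
    rw [h1, Submodule.comap_top] at h2
    exact (h2.trans (sup_eq_left.mpr hW.le)).symm

theorem small_le_coatom {P : Type*} [AddCommGroup P] [Module A P] {K : Submodule A P}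
    (hK : ∀ N : Submodule A P, N ⊔ K = ⊤ → N = ⊤) {N : Submodule A P}
    (hN : IsCoatom N) : K ≤ N := by
  by_contra h
  exact hN.1 (hK N (hN.2 _ (left_lt_sup.mpr h)))


theorem pow_smul_eq_iterate (J : Ideal A) {M : Type u} [AddCommGroup M] [Module A M] (n : ℕ)
    (N : Submodule A M) : (fun N : Submodule A M => J • N)^[n] N = J ^ n • N := by
  induction n generalizing N with
  | zero =>
    have h1 : (Submodule.span A {1} : Ideal A) = ⊤ := Ideal.span_singleton_one
    rw [Function.iterate_zero_apply, Submodule.pow_zero, Submodule.one_eq_span, h1,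
      Submodule.top_smul]
  | succ n ih =>
    rw [Function.iterate_succ_apply, ih (J • N), ← Submodule.smul_assoc,
      Ideal.smul_eq_mul, ← Submodule.pow_succ]

theorem idealPowSMulTop_eq (J : Ideal A) (M : Type u) [AddCommGroup M] [Module A M] (n : ℕ) :
    idealPowSMulTop J M n = J ^ n • (⊤ : Submodule A M) :=
  pow_smul_eq_iterate J n ⊤

/-- A small submodule of a f.g. projective module is contained in `J•P`,
where `J` is the Jacobson radical. -/
theorem small_le_jacobson_smul {P : Type u} [AddCommGroup P] [Module A P] [Module.Finite A P]
    [Module.Projective A P] {K : Submodule A P}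
    (hK : ∀ N : Submodule A P, N ⊔ K = ⊤ → N = ⊤) :
    K ≤ (⊥ : Ideal A).jacobson • (⊤ : Submodule A P) := by
  obtain ⟨k, φ, hφ⟩ := Module.Finite.exists_fin' A P
  obtain ⟨s, hs⟩ := Module.projective_lifting_property φ LinearMap.id hφ
  intro x hx
  have hsx : ∀ i, s x i ∈ (⊥ : Ideal A).jacobson := by
    intro i
    rw [Ideal.jacobson]
    refine Submodule.mem_sInf.mpr ?_
    rintro I ⟨-, hI⟩
    have hsimple : IsSimpleModule A (A ⧸ I) :=
      isSimpleModule_iff_isCoatom.mpr (Ideal.isMaximal_def.mp hI)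
    set c : P →ₗ[A] (A ⧸ I) := I.mkQ ∘ₗ (LinearMap.proj i) ∘ₗ s with hc_def
    have hc : c x = 0 := by
      rcases eq_bot_or_eq_top (LinearMap.range c) with h | h
      · have : c x ∈ LinearMap.range c := ⟨x, rfl⟩
        rw [h] at this
        simpa using this
      · have hker : IsCoatom (LinearMap.ker c) :=
          isCoatom_ker_of_surjective c (LinearMap.range_eq_top.mp h)
        exact small_le_coatom hK hker hx
    have : I.mkQ (s x i) = 0 := hc
    simpa [Submodule.Quotient.mk_eq_zero] using this
  have hsx2 : s x ∈ (⊥ : Ideal A).jacobson • (⊤ : Submodule A (Fin k → A)) := by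
    have heq : s x = ∑ i, Pi.single i (s x i) := (Finset.univ_sum_single (s x)).symm
    rw [heq]
    refine Submodule.sum_mem _ fun i _ => ?_
    have hsingle : Pi.single i (s x i) = (s x i) • (Pi.single i 1 : Fin k → A) := by
      ext j
      rcases eq_or_ne j i with rfl | hj
      · simp
      · simp [Pi.single_apply, hj]
    rw [hsingle]
    exact Submodule.smul_mem_smul (hsx i) Submodule.mem_top
  have hx' : x = φ (s x) := by
    have := LinearMap.congr_fun hs x
    simpa using this.symm
  rw [hx']
  have : φ (s x) ∈ Submodule.map φ ((⊥ : Ideal A).jacobson • ⊤) :=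
    Submodule.mem_map_of_mem hsx2
  rw [Submodule.map_smul''] at this
  have hle : (⊥ : Ideal A).jacobson • Submodule.map φ ⊤ ≤
      (⊥ : Ideal A).jacobson • (⊤ : Submodule A P) := smul_mono_right _ le_top
  exact hle this


section Aux2
variable {A : Type u} [Ring A]

theorem finite_of_cover {P M : Type u} [AddCommGroup P] [Module A P] [AddCommGroup M]
    [Module A M] [Module.Finite A M] (f : P →ₗ[A] M) (hsurj : Function.Surjective f)
    (hsmall : ∀ N : Submodule A P, N ⊔ LinearMap.ker f = ⊤ → N = ⊤) :
    Module.Finite A P := by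
  obtain ⟨S, hS⟩ := Module.Finite.fg_top (R := A) (M := M)
  choose pre hpre using hsurj
  set N : Submodule A P := Submodule.span A (pre '' ↑S) with hN
  have himg : f '' (pre '' ↑S) = ↑S := by
    rw [Set.image_image]
    rw [Set.image_congr (fun x _ => hpre x)]
    exact Set.image_id _
  have hmap : Submodule.map f N = ⊤ := by
    rw [hN, Submodule.map_span, himg, hS]
  have hsup : N ⊔ LinearMap.ker f = ⊤ := by
    rw [eq_top_iff]
    intro p _
    have : f p ∈ Submodule.map f N := hmap ▸ Submodule.mem_top
    obtain ⟨q, hq, hfq⟩ := this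
    refine Submodule.mem_sup.mpr ⟨q, hq, p - q, ?_, by abel⟩
    simp [LinearMap.mem_ker, map_sub, hfq]
  have hNtop := hsmall N hsup
  refine ⟨by rw [← hNtop, hN]; exact Submodule.fg_span (S.finite_toSet.image _)⟩

/-- Every finitely generated module killed by the Jacobson radical is semisimple. -/
theorem isSemisimple_of_fg_jacobson_smul_eq_bot (hsp : IsSemiperfectRing A)
    (X : Type u) [AddCommGroup X] [Module A X] [Module.Finite A X]
    (hX : (⊥ : Ideal A).jacobson • (⊤ : Submodule A X) = ⊥) :
    IsSemisimpleModule A X := by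
  set J := (⊥ : Ideal A).jacobson with hJ
  refine (isSemisimpleModule_iff A X).mpr ⟨?_⟩
  intro S
  obtain ⟨P, _, _, f, hproj, hsurj, hsmall⟩ := hsp (X ⧸ S) inferInstance
  haveI := hproj
  haveI : Module.Finite A P := finite_of_cover f hsurj hsmall
  -- the kernel of the cover is exactly J • ⊤
  have hK1 : LinearMap.ker f ≤ J • (⊤ : Submodule A P) := small_le_jacobson_smul hsmall
  have hJX : ∀ (W : Type u) [AddCommGroup W] [Module A W] (g : P →ₗ[A] W),
      Submodule.map g (J • (⊤ : Submodule A P)) ≤ J • (⊤ : Submodule A W) := by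
    intro W _ _ g
    rw [Submodule.map_smul'']
    exact smul_mono_right _ le_top
  -- lift f through the quotient map X → X ⧸ S
  obtain ⟨φ, hφ⟩ := Module.projective_lifting_property S.mkQ f
    (Submodule.Quotient.mk_surjective S)
  have hker_le : LinearMap.ker f ≤ LinearMap.ker φ := by
    intro p hp
    have h1 : φ p ∈ Submodule.map φ (J • (⊤ : Submodule A P)) :=
      Submodule.mem_map_of_mem (hK1 hp)
    have h2 := hJX X φ h1
    rw [hX] at h2
    simpa using h2
  refine ⟨LinearMap.range φ, ?_, ?_⟩
  · -- disjoint
    rw [disjoint_iff]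
    rw [eq_bot_iff]
    rintro x ⟨hxS, y, rfl⟩
    have h0 : f y = 0 := by
      have := LinearMap.congr_fun hφ y
      simp only [LinearMap.coe_comp, Function.comp_apply] at this
      rw [← this]
      simpa [Submodule.Quotient.mk_eq_zero] using hxS
    have : y ∈ LinearMap.ker f := h0
    simpa using hker_le this
  · -- codisjoint
    rw [codisjoint_iff, eq_top_iff]
    intro x _
    obtain ⟨p, hp⟩ := hsurj (S.mkQ x)
    have hx : x - φ p ∈ S := by
      have := LinearMap.congr_fun hφ p
      simp only [LinearMap.coe_comp, Function.comp_apply] at this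
      rw [← Submodule.Quotient.mk_eq_zero]
      have : S.mkQ (x - φ p) = 0 := by
        rw [map_sub, this, hp, sub_self]
      simpa [Submodule.mkQ_apply] using this
    exact Submodule.mem_sup.mpr ⟨x - φ p, hx, φ p, ⟨p, rfl⟩, by abel⟩

end Aux2
section Aux3
variable {A : Type u} [Ring A]

theorem isArtinian_of_fg_pow_jacobson_smul_eq_bot [IsNoetherianRing A]
    (hsp : IsSemiperfectRing A) (n : ℕ) :
    ∀ (X : Type u) [AddCommGroup X] [Module A X] [Module.Finite A X],
      ((⊥ : Ideal A).jacobson ^ n • (⊤ : Submodule A X) = ⊥) → IsArtinian A X := by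
  set J := (⊥ : Ideal A).jacobson with hJ
  induction n with
  | zero =>
    intro X _ _ _ h
    have h1 : (Submodule.span A {1} : Ideal A) = ⊤ := Ideal.span_singleton_one
    rw [Submodule.pow_zero, Submodule.one_eq_span, h1, Submodule.top_smul] at h
    have : Subsingleton X := by
      refine subsingleton_of_forall_eq 0 fun x => ?_
      have : x ∈ (⊥ : Submodule A X) := h ▸ Submodule.mem_top
      simpa using this
    infer_instance
  | succ n ih =>
    intro X _ _ _ h
    set S := J • (⊤ : Submodule A X) with hS
    haveI : IsNoetherian A X := isNoetherian_of_isNoetherianRing_of_finite A X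
    haveI : Module.Finite A ↥S := ⟨(Submodule.fg_top S).mpr (IsNoetherian.noetherian S)⟩
    haveI hartS : IsArtinian A ↥S := by
      refine ih ↥S ?_
      have hmap : Submodule.map S.subtype (J ^ n • (⊤ : Submodule A ↥S)) = ⊥ := by
        rw [Submodule.map_smul'', Submodule.map_top, Submodule.range_subtype, hS,
          ← Submodule.smul_assoc, Ideal.smul_eq_mul, ← Submodule.pow_succ, h]
      have := Submodule.map_injective_of_injective S.injective_subtype
      rw [← Submodule.map_bot S.subtype] at hmap
      exact this hmap
    haveI hartQ : IsArtinian A (X ⧸ S) := by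
      have hkill : J • (⊤ : Submodule A (X ⧸ S)) = ⊥ := by
        rw [← (Submodule.range_mkQ S), ← Submodule.map_top, ← Submodule.map_smul'', ← hS]
        rw [eq_bot_iff]
        rintro x ⟨y, hy, rfl⟩
        simpa [Submodule.mkQ_apply, Submodule.Quotient.mk_eq_zero] using hy
      haveI := isSemisimple_of_fg_jacobson_smul_eq_bot hsp (X ⧸ S) hkill
      infer_instance
    exact isArtinian_of_range_eq_ker S.subtype S.mkQ
      (by rw [Submodule.range_subtype, Submodule.ker_mkQ])

theorem isFiniteLength_of_fg_pow_jacobson_smul_eq_bot [IsNoetherianRing A]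
    (hsp : IsSemiperfectRing A) (n : ℕ)
    (X : Type u) [AddCommGroup X] [Module A X] [Module.Finite A X]
    (hX : (⊥ : Ideal A).jacobson ^ n • (⊤ : Submodule A X) = ⊥) : IsFiniteLength A X :=
  isFiniteLength_iff_isNoetherian_isArtinian.mpr
    ⟨isNoetherian_of_isNoetherianRing_of_finite A X,
     isArtinian_of_fg_pow_jacobson_smul_eq_bot hsp n X hX⟩

theorem iInf_pow_smul_eq_bot_of_projective
    (hrad : ⨅ n : ℕ, (⊥ : Ideal A).jacobson ^ n • (⊤ : Submodule A A) = ⊥)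
    (P : Type u) [AddCommGroup P] [Module A P] [Module.Finite A P] [Module.Projective A P] :
    ⨅ n : ℕ, (⊥ : Ideal A).jacobson ^ n • (⊤ : Submodule A P) = ⊥ := by
  set J := (⊥ : Ideal A).jacobson with hJ
  obtain ⟨k, φ, hφ⟩ := Module.Finite.exists_fin' A P
  obtain ⟨s, hs⟩ := Module.projective_lifting_property φ LinearMap.id hφ
  rw [eq_bot_iff]
  intro x hx
  have hmem : ∀ (W W' : Type u) [AddCommGroup W] [Module A W] [AddCommGroup W'] [Module A W']
      (g : W →ₗ[A] W') (y : W) (n : ℕ), y ∈ J ^ n • (⊤ : Submodule A W) →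
      g y ∈ J ^ n • (⊤ : Submodule A W') := by
    intro W W' _ _ _ _ g y n hy
    have h1 : g y ∈ Submodule.map g (J ^ n • (⊤ : Submodule A W)) := Submodule.mem_map_of_mem hy
    rw [Submodule.map_smul''] at h1
    have hle : J ^ n • Submodule.map g ⊤ ≤ J ^ n • (⊤ : Submodule A W') :=
      smul_mono_right _ le_top
    exact hle h1
  have hx0 : ∀ i, s x i = 0 := by
    intro i
    have : s x i ∈ (⊥ : Submodule A A) := by
      rw [← hrad]
      refine Submodule.mem_iInf _ |>.mpr fun n => ?_
      have h1 : x ∈ J ^ n • (⊤ : Submodule A P) := (Submodule.mem_iInf _).mp hx n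
      exact hmem _ _ ((LinearMap.proj i).comp s) x n h1
    simpa using this
  have : s x = 0 := funext hx0
  have hxx : x = φ (s x) := by
    have := LinearMap.congr_fun hs x
    simpa using this.symm
  rw [hxx, this, map_zero]
  exact Submodule.zero_mem ⊥

end Aux3
section MainAux
variable {A : Type u} [Ring A]

set_option maxHeartbeats 1000000 in
theorem ker_le_pow_smul_of_cover [IsNoetherianRing A] (hsp : IsSemiperfectRing A)
    {P M : Type u} [AddCommGroup P] [Module A P] [AddCommGroup M] [Module A M]
    [Module.Finite A M] [Module.Finite A P]
    (f : P →ₗ[A] M) (hsurj : Function.Surjective f)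
    (hsmall : ∀ N : Submodule A P, N ⊔ LinearMap.ker f = ⊤ → N = ⊤)
    (hexact : ∀ (X Y Z : Type u) [AddCommGroup X] [Module A X] [AddCommGroup Y] [Module A Y]
      [AddCommGroup Z] [Module A Z], IsFiniteLength A X → IsFiniteLength A Y →
      IsFiniteLength A Z → ∀ (f : X →ₗ[A] Y) (g : Y →ₗ[A] Z),
        Function.Injective f → Function.Surjective g → Function.Exact f g →
          (Function.Injective (fun h : M →ₗ[A] X => f ∘ₗ h) ∧
           Function.Exact (fun h : M →ₗ[A] X => f ∘ₗ h) (fun h : M →ₗ[A] Y => g ∘ₗ h) ∧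
           Function.Surjective (fun h : M →ₗ[A] Y => g ∘ₗ h)))
    (n : ℕ) : LinearMap.ker f ≤ (⊥ : Ideal A).jacobson ^ n • (⊤ : Submodule A P) := by
  set J := (⊥ : Ideal A).jacobson with hJ
  set Qp := J ^ n • (⊤ : Submodule A P) with hQp
  set Qm := J ^ n • (⊤ : Submodule A M) with hQm
  have hcomap : Qp ≤ Qm.comap f := by
    rw [← Submodule.map_le_iff_le_comap, hQp, Submodule.map_smul'']
    exact smul_mono_right _ le_top
  set fbar : (P ⧸ Qp) →ₗ[A] (M ⧸ Qm) := Submodule.mapQ Qp Qm f hcomap with hfbar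
  have hfbar_apply : ∀ p : P, fbar (Qp.mkQ p) = Qm.mkQ (f p) := by
    intro p
    simp [hfbar, Submodule.mapQ_apply, Submodule.mkQ_apply]
  have hfbar_surj : Function.Surjective fbar := by
    intro z
    obtain ⟨m, rfl⟩ := Submodule.Quotient.mk_surjective Qm z
    obtain ⟨p, rfl⟩ := hsurj m
    exact ⟨Qp.mkQ p, by simpa [Submodule.mkQ_apply] using hfbar_apply p⟩
  have hkill : ∀ (W : Type u) [AddCommGroup W] [Module A W] (Q : Submodule A W),
      Q = J ^ n • (⊤ : Submodule A W) → J ^ n • (⊤ : Submodule A (W ⧸ Q)) = ⊥ := by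
    intro W _ _ Q hQ
    rw [← Submodule.range_mkQ Q, ← Submodule.map_top, ← Submodule.map_smul'', ← hQ]
    rw [eq_bot_iff]
    rintro x ⟨y, hy, rfl⟩
    simpa [Submodule.mkQ_apply, Submodule.Quotient.mk_eq_zero] using hy
  have hQp0 : J ^ n • (⊤ : Submodule A (P ⧸ Qp)) = ⊥ := hkill P Qp hQp
  have hQm0 : J ^ n • (⊤ : Submodule A (M ⧸ Qm)) = ⊥ := hkill M Qm hQm
  have hY : IsFiniteLength A (P ⧸ Qp) :=
    isFiniteLength_of_fg_pow_jacobson_smul_eq_bot hsp n _ hQp0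
  have hZ : IsFiniteLength A (M ⧸ Qm) :=
    isFiniteLength_of_fg_pow_jacobson_smul_eq_bot hsp n _ hQm0
  have hX : IsFiniteLength A ↥(LinearMap.ker fbar) := by
    obtain ⟨hno, har⟩ := isFiniteLength_iff_isNoetherian_isArtinian.mp hY
    exact isFiniteLength_iff_isNoetherian_isArtinian.mpr ⟨inferInstance, inferInstance⟩
  have hex : Function.Exact ⇑(LinearMap.ker fbar).subtype ⇑fbar := by
    rw [LinearMap.exact_iff]
    exact (Submodule.range_subtype _).symm
  obtain ⟨-, -, hsurjHom⟩ := hexact ↥(LinearMap.ker fbar) (P ⧸ Qp) (M ⧸ Qm) hX hY hZ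
    (LinearMap.ker fbar).subtype fbar (Submodule.injective_subtype _) hfbar_surj hex
  obtain ⟨h, hh⟩ := hsurjHom Qm.mkQ
  have hh' : ∀ m : M, fbar (h m) = Qm.mkQ m := fun m => by
    simpa using LinearMap.congr_fun hh m
  have hQm_map : Qm = Submodule.map f Qp := by
    rw [hQp, hQm, Submodule.map_smul'', Submodule.map_top, LinearMap.range_eq_top.mpr hsurj]
  have hkerle : LinearMap.ker fbar ≤ Submodule.map Qp.mkQ (LinearMap.ker f) := by
    intro x hx
    obtain ⟨p, rfl⟩ := Submodule.Quotient.mk_surjective Qp x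
    have h0 : Qm.mkQ (f p) = 0 := by
      rw [← hfbar_apply]
      simpa [Submodule.mkQ_apply] using hx
    have h1 : f p ∈ Qm := by simpa [Submodule.mkQ_apply, Submodule.Quotient.mk_eq_zero] using h0
    rw [hQm_map] at h1
    obtain ⟨p', hp', hfp⟩ := h1
    refine ⟨p - p', ?_, ?_⟩
    · simp [LinearMap.mem_ker, map_sub, hfp]
    · have hz : Qp.mkQ p' = 0 := by
        simpa [Submodule.mkQ_apply, Submodule.Quotient.mk_eq_zero] using hp'
      rw [map_sub, hz, sub_zero, Submodule.mkQ_apply]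
  have hN : Submodule.comap Qp.mkQ (LinearMap.range (h ∘ₗ f)) ⊔ LinearMap.ker f = ⊤ := by
    rw [eq_top_iff]
    intro p _
    have hker : Qp.mkQ p - h (f p) ∈ LinearMap.ker fbar := by
      rw [LinearMap.mem_ker, map_sub, hfbar_apply, hh' (f p), sub_self]
    obtain ⟨k, hk, hqk⟩ := hkerle hker
    refine Submodule.mem_sup.mpr ⟨p - k, ?_, k, hk, by abel⟩
    rw [Submodule.mem_comap]
    refine ⟨p - k, ?_⟩
    have hfk : f k = 0 := hk
    rw [LinearMap.comp_apply, map_sub, hfk, sub_zero, map_sub, hqk]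
    abel
  have hNtop := hsmall _ hN
  intro x hx
  have hxN : x ∈ Submodule.comap Qp.mkQ (LinearMap.range (h ∘ₗ f)) := by
    rw [hNtop]; trivial
  obtain ⟨p₀, hp₀⟩ := hxN
  rw [LinearMap.comp_apply] at hp₀
  have hm : f p₀ ∈ Qm := by
    have h2 : Qm.mkQ (f p₀) = fbar (h (f p₀)) := (hh' (f p₀)).symm
    rw [hp₀, hfbar_apply] at h2
    have hfx : f x = 0 := hx
    rw [hfx, map_zero] at h2
    simpa [Submodule.mkQ_apply, Submodule.Quotient.mk_eq_zero] using h2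
  have hhm : h (f p₀) ∈ J ^ n • (⊤ : Submodule A (P ⧸ Qp)) := by
    have h1 : h (f p₀) ∈ Submodule.map h Qm := Submodule.mem_map_of_mem hm
    rw [hQm, Submodule.map_smul''] at h1
    have hle : J ^ n • Submodule.map h ⊤ ≤ J ^ n • (⊤ : Submodule A (P ⧸ Qp)) :=
      smul_mono_right _ le_top
    exact hle h1
  rw [hQp0] at hhm
  have hzero : Qp.mkQ x = 0 := by
    rw [← hp₀]
    simpa using hhm
  simpa [Submodule.mkQ_apply, Submodule.Quotient.mk_eq_zero] using hzero

end MainAux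


/-- Let `A` be a noetherian semiperfect ring whose Jacobson radical `m`
satisfies `⋂ₙ mⁿ = 0`, and let `M` be a finitely generated left `A`-module such that
`Hom_A(M, −)` is exact on finite-length left `A`-modules.  Then `M` is projective. -/
theorem projective_of_hom_exact_on_finite_length (A : Type u) [Ring A] [IsNoetherianRing A]
    (hsp : IsSemiperfectRing A)
    (hrad : ⨅ n : ℕ, idealPowSMulTop ((⊥ : Ideal A).jacobson) A n = ⊥)
    (M : Type u) [AddCommGroup M] [Module A M] [Module.Finite A M]
    (hexact : ∀ (X Y Z : Type u) [AddCommGroup X] [Module A X] [AddCommGroup Y] [Module A Y]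
      [AddCommGroup Z] [Module A Z], IsFiniteLength A X → IsFiniteLength A Y →
      IsFiniteLength A Z → ∀ (f : X →ₗ[A] Y) (g : Y →ₗ[A] Z),
        Function.Injective f → Function.Surjective g → Function.Exact f g →
          (Function.Injective (fun h : M →ₗ[A] X => f ∘ₗ h) ∧
           Function.Exact (fun h : M →ₗ[A] X => f ∘ₗ h) (fun h : M →ₗ[A] Y => g ∘ₗ h) ∧
           Function.Surjective (fun h : M →ₗ[A] Y => g ∘ₗ h))) :
    Module.Projective A M := by
  have hrad' : ⨅ n : ℕ, (⊥ : Ideal A).jacobson ^ n • (⊤ : Submodule A A) = ⊥ := by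
    have hconv : (⨅ n : ℕ, idealPowSMulTop ((⊥ : Ideal A).jacobson) A n)
        = ⨅ n : ℕ, (⊥ : Ideal A).jacobson ^ n • (⊤ : Submodule A A) :=
      iInf_congr fun n => idealPowSMulTop_eq ((⊥ : Ideal A).jacobson) A n
    rw [← hconv]
    exact hrad
  obtain ⟨P, _, _, f, hproj, hsurj, hsmall⟩ := hsp M inferInstance
  haveI := hproj
  haveI : Module.Finite A P := finite_of_cover f hsurj hsmall
  have hPinf : ⨅ n : ℕ, (⊥ : Ideal A).jacobson ^ n • (⊤ : Submodule A P) = ⊥ :=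
    iInf_pow_smul_eq_bot_of_projective hrad' P
  have key : ∀ n : ℕ, LinearMap.ker f ≤ (⊥ : Ideal A).jacobson ^ n • (⊤ : Submodule A P) :=
    fun n => ker_le_pow_smul_of_cover hsp f hsurj hsmall hexact n
  have hker : LinearMap.ker f = ⊥ := by
    rw [eq_bot_iff, ← hPinf]
    exact le_iInf key
  have hbij : Function.Bijective f := ⟨LinearMap.ker_eq_bot.mp hker, hsurj⟩
  exact Module.Projective.of_equiv (LinearEquiv.ofBijective f hbij)
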